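/- For m ≥ 3, the continuous m-homogeneous polynomial P_m : ℓ₂ → ℝ defined by P_m(x) = x₁^m + m x₁^{m−2} Σ_{j≥2} (j/(j+1)) x_j² has norm ‖P_m‖ = 2((m−2)/(m−1))^{(m−2)/2}, and P_m does not attain its norm. -/

import Mathlib

open Real Filter
set_option maxHeartbeats 1600000

private lemma amgm_key (k : ℕ) (hk : 1 ≤ k) (r : ℝ) (hr : 0 ≤ r) :
    ((k:ℝ)+2) * r^k - ((k:ℝ)+1) * r^(k+2) ≤ 2 * (Real.sqrt ((k:ℝ)/((k:ℝ)+1)))^k := by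
  set c : ℝ := Real.sqrt ((k:ℝ)/((k:ℝ)+1)) with hc
  have hkpos : (0:ℝ) < k := by exact_mod_cast hk
  have hc0 : 0 ≤ c := Real.sqrt_nonneg _
  have hcsq : c^2 = (k:ℝ)/((k:ℝ)+1) := Real.sq_sqrt (by positivity)
  by_cases hb : ((k:ℝ)+2) - ((k:ℝ)+1) * r^2 ≤ 0
  · have h0 : ((k:ℝ)+2) * r^k - ((k:ℝ)+1) * r^(k+2) = r^k * (((k:ℝ)+2) - ((k:ℝ)+1) * r^2) := by
      ring
    rw [h0]
    have h1 : r^k * (((k:ℝ)+2) - ((k:ℝ)+1) * r^2) ≤ 0 :=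
      mul_nonpos_of_nonneg_of_nonpos (by positivity) hb
    have h2 : (0:ℝ) ≤ 2 * c^k := by positivity
    linarith
  · push_neg at hb
    set b : ℝ := (((k:ℝ)+2) - ((k:ℝ)+1) * r^2)/2 with hbdef
    have hbpos : 0 < b := by positivity
    set a : ℝ := r^2 * ((k:ℝ)+1)/(k:ℝ) with hadef
    have ha0 : 0 ≤ a := by positivity
    set w : ℝ := (k:ℝ)/((k:ℝ)+2) with hw
    have hw0 : 0 ≤ w := by positivity
    have hw1 : 0 ≤ 1 - w := by
      rw [hw, sub_nonneg, div_le_one (by positivity)]; linarith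
    have hsum : w * a + (1 - w) * b = 1 := by
      rw [hw, hadef, hbdef]
      field_simp
      ring
    have hgm : a ^ w * b ^ (1-w) ≤ 1 := by
      have h := Real.geom_mean_le_arith_mean2_weighted hw0 hw1 ha0 hbpos.le (by ring)
      linarith [hsum ▸ h]
    have hpow' : (a ^ w * b ^ (1-w)) ^ ((k:ℝ)+2) ≤ 1 := by
      have h := Real.rpow_le_rpow (by positivity) hgm (by positivity : (0:ℝ) ≤ (k:ℝ)+2)
      simpa using h
    have hwk : w * ((k:ℝ)+2) = ((k:ℕ):ℝ) := by
      rw [hw]; field_simp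
    have hw2 : (1-w) * ((k:ℝ)+2) = ((2:ℕ):ℝ) := by
      rw [hw]; field_simp; push_cast; ring
    have hexp : (a ^ w * b ^ (1-w)) ^ ((k:ℝ)+2) = a ^ k * b ^ 2 := by
      rw [Real.mul_rpow (Real.rpow_nonneg ha0 _) (Real.rpow_nonneg hbpos.le _),
        ← Real.rpow_natCast a k, ← Real.rpow_natCast b 2,
        ← Real.rpow_mul ha0, ← Real.rpow_mul hbpos.le, hwk, hw2]
    have hpow : a ^ k * b ^ 2 ≤ 1 := hexp ▸ hpow'
    have hak : a ^ k = r^(2*k) * (((k:ℝ)+1)/(k:ℝ))^k := by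
      rw [hadef, mul_div_assoc, mul_pow, ← pow_mul]
    have hprod : (((k:ℝ)+1)/(k:ℝ))^k * ((k:ℝ)/((k:ℝ)+1))^k = 1 := by
      rw [← mul_pow, div_mul_div_comm, mul_comm, div_self (by positivity), one_pow]
    have hckk : (c ^ k) ^ 2 = ((k:ℝ)/((k:ℝ)+1))^k := by
      rw [← pow_mul, mul_comm k 2, pow_mul, hcsq]
    have h2 : r^(2*k) * b^2 ≤ ((k:ℝ)/((k:ℝ)+1))^k := by
      have hmul := mul_le_mul_of_nonneg_right hpow
        (by positivity : (0:ℝ) ≤ ((k:ℝ)/((k:ℝ)+1))^k)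
      rw [one_mul] at hmul
      have heq : a ^ k * b ^ 2 * ((k:ℝ)/((k:ℝ)+1))^k = r^(2*k) * b^2 := by
        rw [hak]
        linear_combination (r^(2*k) * b^2) * hprod
      linarith [heq ▸ hmul]
    have hineq : (r^k * b)^2 ≤ (c^k)^2 := by
      rw [hckk, mul_pow, ← pow_mul, mul_comm k 2]
      exact h2
    have hfin : r^k * b ≤ c^k := by
      nlinarith [hineq, mul_nonneg (pow_nonneg hr k) hbpos.le, pow_nonneg hc0 k]
    calc ((k:ℝ)+2) * r^k - ((k:ℝ)+1) * r^(k+2) = 2 * (r^k * b) := by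
          rw [hbdef]; ring
      _ ≤ 2 * c^k := by linarith

private lemma one_lt_M (k : ℕ) (hk : 1 ≤ k) : 1 < 2 * (Real.sqrt ((k:ℝ)/((k:ℝ)+1)))^k := by
  set c : ℝ := Real.sqrt ((k:ℝ)/((k:ℝ)+1)) with hc
  have hkpos : (0:ℝ) < k := by exact_mod_cast hk
  have hcpos : 0 < c := Real.sqrt_pos.2 (by positivity)
  have hcsq : c^2 = (k:ℝ)/((k:ℝ)+1) := Real.sq_sqrt (by positivity)
  have h1 : (((k:ℝ)+1)/(k:ℝ))^k ≤ Real.exp 1 := by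
    have hb : ((k:ℝ)+1)/(k:ℝ) ≤ Real.exp (1/(k:ℝ)) := by
      have h := Real.add_one_le_exp (1/(k:ℝ))
      have heq : ((k:ℝ)+1)/(k:ℝ) = 1/(k:ℝ) + 1 := by field_simp; ring
      linarith [heq ▸ h]
    calc (((k:ℝ)+1)/(k:ℝ))^k ≤ (Real.exp (1/(k:ℝ)))^k :=
          pow_le_pow_left₀ (by positivity) hb k
      _ = Real.exp ((k:ℝ) * (1/(k:ℝ))) := (Real.exp_nat_mul _ k).symm
      _ = Real.exp 1 := by rw [mul_one_div, div_self hkpos.ne']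
  have h4 : Real.exp 1 < 4 := by
    have := Real.exp_one_lt_d9
    linarith
  have hprod : ((k:ℝ)/((k:ℝ)+1))^k * (((k:ℝ)+1)/(k:ℝ))^k = 1 := by
    rw [← mul_pow, div_mul_div_comm, mul_comm, div_self (by positivity), one_pow]
  have hinv : (1:ℝ)/4 < ((k:ℝ)/((k:ℝ)+1))^k := by
    have hpk : (0:ℝ) < (((k:ℝ)+1)/(k:ℝ))^k := by positivity
    rw [div_lt_iff₀ (by norm_num)]
    nlinarith [hprod, h1, h4, hpk]
  have hck : (c^k)^2 = ((k:ℝ)/((k:ℝ)+1))^k := by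
    rw [← pow_mul, mul_comm k 2, pow_mul, hcsq]
  have h5 : (1:ℝ)/2 < c^k := by
    nlinarith [hck, hinv, pow_pos hcpos k]
  linarith

private lemma norm_sq_eq (x : lp (fun _ : ℕ => ℝ) 2) :
    ‖x‖^2 = ∑' i, ((x : ∀ _ : ℕ, ℝ) i)^2 := by
  have h := lp.norm_rpow_eq_tsum (p := 2) (by norm_num) x
  simp only [ENNReal.toReal_ofNat] at h
  rw [show ((2:ℝ)) = ((2:ℕ):ℝ) by norm_num] at h
  simp only [Real.rpow_natCast] at h
  simpa [sq_abs] using h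

private lemma summable_sq (x : lp (fun _ : ℕ => ℝ) 2) :
    Summable (fun i => ((x : ∀ _ : ℕ, ℝ) i)^2) := by
  have h := (memℓp_gen_iff (p := 2) (by norm_num)).1 (lp.memℓp x)
  simp only [ENNReal.toReal_ofNat] at h
  rw [show ((2:ℝ)) = ((2:ℕ):ℝ) by norm_num] at h
  simp only [Real.rpow_natCast] at h
  simpa [sq_abs] using h

noncomputable def xnAux (c d : ℝ) (n : ℕ) : lp (fun _ : ℕ => ℝ) 2 :=
  lp.single 2 0 c + lp.single 2 (n+1) d

private lemma xnAux_coe0 (c d : ℝ) (n : ℕ) : ((xnAux c d n : ∀ _ : ℕ, ℝ)) 0 = c := by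
  simp [xnAux, lp.coeFn_add, lp.single_apply]

private lemma xnAux_coe_succ (c d : ℝ) (n i : ℕ) :
    ((xnAux c d n : ∀ _ : ℕ, ℝ)) (i+1) = if i = n then d else 0 := by
  simp [xnAux, lp.coeFn_add, lp.single_apply, Pi.single_apply]

private lemma xnAux_norm (c d : ℝ) (h : c^2 + d^2 = 1) (n : ℕ) :
    ‖xnAux c d n‖ = 1 := by
  have hsq := norm_sq_eq (xnAux c d n)
  have htsum : ∑' i, ((xnAux c d n : ∀ _ : ℕ, ℝ) i)^2 = c^2 + d^2 := by
    rw [tsum_eq_sum (s := {0, n+1}) ?_]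
    · rw [Finset.sum_pair (by omega : (0:ℕ) ≠ n+1)]
      rw [xnAux_coe0]
      have h2 := xnAux_coe_succ c d n n
      rw [if_pos rfl] at h2
      rw [h2]
    · intro i hi
      simp only [Finset.mem_insert, Finset.mem_singleton] at hi
      push_neg at hi
      obtain ⟨h1, h2⟩ := hi
      obtain ⟨j, rfl⟩ := Nat.exists_eq_succ_of_ne_zero h1
      rw [xnAux_coe_succ, if_neg (by omega)]
      ring
  have h1 : ‖xnAux c d n‖^2 = 1 := by rw [hsq, htsum, h]
  nlinarith [norm_nonneg (xnAux c d n)]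

theorem Pm_norm_not_attained (m : ℕ) (hm : 3 ≤ m)
    (P : lp (fun _ : ℕ => ℝ) 2 → ℝ)
    (hP : ∀ x, P x = ((x : ∀ _ : ℕ, ℝ) 0) ^ m +
      (m : ℝ) * ((x : ∀ _ : ℕ, ℝ) 0) ^ (m - 2) *
        ∑' i : ℕ, (((i : ℝ) + 2) / ((i : ℝ) + 3)) * ((x : ∀ _ : ℕ, ℝ) (i + 1)) ^ 2) :
    sSup {c : ℝ | ∃ x, ‖x‖ = 1 ∧ c = |P x|} =
      2 * (((m : ℝ) - 2) / ((m : ℝ) - 1)) ^ (((m : ℝ) - 2) / 2) ∧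
    ¬ ∃ x, ‖x‖ = 1 ∧ |P x| = sSup {c : ℝ | ∃ x, ‖x‖ = 1 ∧ c = |P x|} := by
  obtain ⟨k, rfl⟩ : ∃ k, m = k + 2 := ⟨m - 2, by omega⟩
  have hk : 1 ≤ k := by omega
  have hkpos : (0:ℝ) < k := by exact_mod_cast hk
  set S : Set ℝ := {c : ℝ | ∃ x, ‖x‖ = 1 ∧ c = |P x|} with hS
  set c : ℝ := Real.sqrt ((k:ℝ)/((k:ℝ)+1)) with hcdef
  set M : ℝ := 2 * c^k with hMdef
  have hc0 : 0 ≤ c := Real.sqrt_nonneg _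
  have hcsq : c^2 = (k:ℝ)/((k:ℝ)+1) := Real.sq_sqrt (by positivity)
  have hM1 : 1 < M := one_lt_M k hk
  -- strict upper bound
  have hub : ∀ x : lp (fun _ : ℕ => ℝ) 2, ‖x‖ = 1 → |P x| < M := by
    intro x hx
    have hsum : Summable (fun i => ((x : ∀ _ : ℕ, ℝ) i)^2) := summable_sq x
    have htot : ∑' i, ((x : ∀ _ : ℕ, ℝ) i)^2 = 1 := by
      rw [← norm_sq_eq x, hx]; norm_num
    have hTsum : Summable (fun i => ((x : ∀ _ : ℕ, ℝ) (i+1))^2) :=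
      (summable_nat_add_iff 1).2 hsum
    have htail : ∑' i, ((x : ∀ _ : ℕ, ℝ) (i+1))^2 = 1 - ((x : ∀ _ : ℕ, ℝ) 0)^2 := by
      have h0 := Summable.tsum_eq_zero_add hsum
      rw [htot] at h0
      linarith
    set Q : ℝ := ∑' i : ℕ, (((i : ℝ) + 2) / ((i : ℝ) + 3)) * ((x : ∀ _ : ℕ, ℝ) (i + 1)) ^ 2
      with hQdef
    have hterm_nonneg : ∀ i : ℕ,
        0 ≤ (((i : ℝ) + 2) / ((i : ℝ) + 3)) * ((x : ∀ _ : ℕ, ℝ) (i + 1)) ^ 2 :=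
      fun i => by positivity
    have hterm_le : ∀ i : ℕ,
        (((i : ℝ) + 2) / ((i : ℝ) + 3)) * ((x : ∀ _ : ℕ, ℝ) (i + 1)) ^ 2 ≤
          ((x : ∀ _ : ℕ, ℝ) (i + 1)) ^ 2 := by
      intro i
      have h1 : ((i:ℝ)+2)/((i:ℝ)+3) ≤ 1 := by
        rw [div_le_one (by positivity)]; linarith
      nlinarith [sq_nonneg ((x : ∀ _ : ℕ, ℝ) (i+1))]
    have hQsum : Summable (fun i : ℕ =>
        (((i : ℝ) + 2) / ((i : ℝ) + 3)) * ((x : ∀ _ : ℕ, ℝ) (i + 1)) ^ 2) :=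
      Summable.of_nonneg_of_le hterm_nonneg hterm_le hTsum
    have hQ0 : 0 ≤ Q := tsum_nonneg hterm_nonneg
    have hQle : Q ≤ 1 - ((x : ∀ _ : ℕ, ℝ) 0)^2 := by
      rw [← htail]
      exact Summable.tsum_le_tsum hterm_le hQsum hTsum
    set r : ℝ := |(x : ∀ _ : ℕ, ℝ) 0| with hrdef
    have hr0 : 0 ≤ r := abs_nonneg _
    have hr2 : r^2 = ((x : ∀ _ : ℕ, ℝ) 0)^2 := sq_abs _
    have hPx : P x = ((x : ∀ _ : ℕ, ℝ) 0)^(k+2) + ((k:ℝ)+2) * ((x : ∀ _ : ℕ, ℝ) 0)^k * Q := by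
      rw [hP x, hQdef]
      simp only [Nat.add_sub_cancel]
      push_cast
      ring
    have habs : |P x| ≤ r^(k+2) + ((k:ℝ)+2) * r^k * Q := by
      rw [hPx]
      calc |((x : ∀ _ : ℕ, ℝ) 0)^(k+2) + ((k:ℝ)+2) * ((x : ∀ _ : ℕ, ℝ) 0)^k * Q|
          ≤ |((x : ∀ _ : ℕ, ℝ) 0)^(k+2)| + |((k:ℝ)+2) * ((x : ∀ _ : ℕ, ℝ) 0)^k * Q| :=
            abs_add_le _ _
        _ = r^(k+2) + ((k:ℝ)+2) * r^k * Q := by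
            rw [abs_mul, abs_mul, abs_pow, abs_pow,
              abs_of_nonneg (by positivity : (0:ℝ) ≤ (k:ℝ)+2), abs_of_nonneg hQ0]
    by_cases hzero : ∑' i, ((x : ∀ _ : ℕ, ℝ) (i+1))^2 = 0
    · have h10 : 1 - ((x : ∀ _ : ℕ, ℝ) 0)^2 = 0 := by rw [← htail, hzero]
      have hr1 : r^2 = 1 := by rw [hr2]; linarith
      have hQz : Q = 0 := le_antisymm (by linarith) hQ0
      have hre : r = 1 := by
        have hfac : (r-1)*(r+1) = 0 := by linear_combination hr1
        rcases mul_eq_zero.1 hfac with h | h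
        · linarith
        · linarith
      rw [hre, hQz] at habs
      simp only [one_pow, mul_zero, mul_one, add_zero] at habs
      linarith
    · have hTnn : 0 ≤ ∑' i, ((x : ∀ _ : ℕ, ℝ) (i+1))^2 := tsum_nonneg fun i => sq_nonneg _
      obtain ⟨j, hj⟩ : ∃ j, ((x : ∀ _ : ℕ, ℝ) (j+1))^2 ≠ 0 := by
        by_contra hall
        push_neg at hall
        exact hzero (by simp [hall])
      have hjpos : 0 < ((x : ∀ _ : ℕ, ℝ) (j+1))^2 := lt_of_le_of_ne (sq_nonneg _) (Ne.symm hj)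
      have hQlt : Q < ∑' i, ((x : ∀ _ : ℕ, ℝ) (i+1))^2 := by
        refine Summable.tsum_lt_tsum (i := j) hterm_le ?_ hQsum hTsum
        have h1 : ((j:ℝ)+2)/((j:ℝ)+3) < 1 := by
          rw [div_lt_one (by positivity)]; linarith
        nlinarith [hjpos]
      by_cases hr : r = 0
      · have hg0 : (x : ∀ _ : ℕ, ℝ) 0 = 0 := abs_eq_zero.1 hr
        have hP0 : P x = 0 := by
          rw [hPx, hg0, zero_pow (by omega : k + 2 ≠ 0), zero_pow (by omega : k ≠ 0)]
          ring
        rw [hP0]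
        simpa using lt_trans one_pos hM1
      · have hrpos : 0 < r := lt_of_le_of_ne hr0 (Ne.symm hr)
        have hQlt' : Q < 1 - r^2 := by
          rw [hr2, ← htail]; exact hQlt
        have h2 : |P x| < r^(k+2) + ((k:ℝ)+2) * r^k * (1 - r^2) := by
          have h3 : ((k:ℝ)+2) * r^k * Q < ((k:ℝ)+2) * r^k * (1-r^2) :=
            mul_lt_mul_of_pos_left hQlt' (by positivity)
          linarith
        have h3 : r^(k+2) + ((k:ℝ)+2) * r^k * (1 - r^2)
            = ((k:ℝ)+2) * r^k - ((k:ℝ)+1) * r^(k+2) := by ring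
        calc |P x| < r^(k+2) + ((k:ℝ)+2) * r^k * (1 - r^2) := h2
          _ ≤ M := by rw [h3]; exact amgm_key k hk r hr0
  have hbdd : BddAbove S := ⟨M, fun y hy => by
    obtain ⟨x, hx1, hx2⟩ := hy
    exact hx2 ▸ (hub x hx1).le⟩
  -- the approximating sequence
  set d : ℝ := Real.sqrt (1/((k:ℝ)+1)) with hddef
  have hd2 : d^2 = 1/((k:ℝ)+1) := Real.sq_sqrt (by positivity)
  have hcd : c^2 + d^2 = 1 := by
    rw [hcsq, hd2]; field_simp
  set v : ℕ → ℝ := fun n =>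
    c^(k+2) + (((k:ℝ)+2) * c^k * d^2) * (((n:ℝ)+2)/((n:ℝ)+3)) with hvdef
  have hv_mem : ∀ n, v n ∈ S := by
    intro n
    refine ⟨xnAux c d n, xnAux_norm c d hcd n, ?_⟩
    have htsum : ∑' i : ℕ, (((i : ℝ) + 2) / ((i : ℝ) + 3)) *
        ((xnAux c d n : ∀ _ : ℕ, ℝ) (i + 1)) ^ 2 = (((n:ℝ)+2)/((n:ℝ)+3)) * d^2 := by
      rw [tsum_eq_single n ?_]
      · rw [xnAux_coe_succ, if_pos rfl]
      · intro i hi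
        rw [xnAux_coe_succ, if_neg hi]
        ring
    have hPv : P (xnAux c d n) = v n := by
      rw [hP, xnAux_coe0, htsum, hvdef]
      simp only [Nat.add_sub_cancel]
      push_cast
      ring
    have hvnn : 0 ≤ v n := by
      rw [hvdef]
      positivity
    rw [← hPv] at hvnn ⊢
    rw [abs_of_nonneg hvnn]
  have htendw : Tendsto (fun n : ℕ => ((n:ℝ)+2)/((n:ℝ)+3)) atTop (nhds 1) := by
    have h3 : Tendsto (fun n : ℕ => ((n:ℝ)+3)) atTop atTop :=
      tendsto_atTop_add_const_right _ 3 tendsto_natCast_atTop_atTop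
    have hinv : Tendsto (fun n : ℕ => (((n:ℝ)+3))⁻¹) atTop (nhds 0) :=
      tendsto_inv_atTop_zero.comp h3
    have heq : ∀ n : ℕ, ((n:ℝ)+2)/((n:ℝ)+3) = 1 - (((n:ℝ)+3))⁻¹ := by
      intro n
      have hne : ((n:ℝ)+3) ≠ 0 := by positivity
      field_simp
      ring
    simp only [heq]
    have := tendsto_const_nhds (x := (1:ℝ)) (f := atTop (α := ℕ)) |>.sub hinv
    simpa using this
  have htendv : Tendsto v atTop (nhds M) := by
    have hlim : Tendsto v atTop (nhds (c^(k+2) + (((k:ℝ)+2) * c^k * d^2) * 1)) := by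
      exact tendsto_const_nhds.add (htendw.const_mul _)
    have heqM : c^(k+2) + (((k:ℝ)+2) * c^k * d^2) * 1 = M := by
      rw [hMdef, pow_add, hcsq, hd2]
      field_simp
      ring
    rwa [heqM] at hlim
  have hSne : S.Nonempty := ⟨v 0, hv_mem 0⟩
  have hsSup : sSup S = M := by
    apply le_antisymm
    · apply csSup_le hSne
      intro y hy
      obtain ⟨x, hx1, hx2⟩ := hy
      exact hx2 ▸ (hub x hx1).le
    · exact le_of_tendsto' htendv fun n => le_csSup hbdd (hv_mem n)
  have hR : 2 * ((k:ℝ)/((k:ℝ)+1)) ^ ((k:ℝ)/2) = M := by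
    rw [hMdef]
    congr 1
    rw [show ((k:ℝ)/2) = (1/2) * (k:ℝ) by ring, Real.rpow_mul (by positivity), hcdef,
      Real.sqrt_eq_rpow, ← Real.rpow_natCast (((k:ℝ)/((k:ℝ)+1)) ^ ((1:ℝ)/2)) k]
  constructor
  · rw [hsSup, ← hR]
    congr 2 <;> push_cast <;> ring
  · rintro ⟨x, hx1, hx2⟩
    rw [hsSup] at hx2
    exact absurd hx2 (ne_of_lt (hub x hx1))
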